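/- Liar-cycle support conditions preclude a global joint distribution (probabilistic core of Theorem 15 and of the proof that a finite Yablo-type paradox is impossible): Let N ≥ 2, let A_0, …, A_{N−1} be nonempty finite types with values v_i ∈ A_i, and let p be a probability mass function on the product Π_{i} A_i. If p assigns probability 0 to each event {ω : ω_i = v_i and ω_{i+1} ≠ v_{i+1}} for i = 0, …, N−2, and probability 0 to the event {ω : ω_{N−1} = v_{N−1} and ω_0 = v_0}, then p assigns probability 0 to the event {ω : ω_0 = v_0}. -/
import Mathlib


/-- The probability that a PMF assigns to an event. -/
noncomputable def prob {α : Type*} (p : PMF α) (E : Set α) : ENNReal :=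
  p.toOuterMeasure E

lemma prob_eq_zero_iff {α : Type*} (p : PMF α) (E : Set α) :
    prob p E = 0 ↔ ∀ ω ∈ E, p ω = 0 := by
  rw [prob, PMF.toOuterMeasure_apply_eq_zero_iff, Set.disjoint_left]
  constructor
  · intro h ω hω
    by_contra hne
    exact h (PMF.mem_support_iff p ω |>.2 hne) hω
  · intro h ω hm hω
    exact (PMF.mem_support_iff p ω |>.1 hm) (h ω hω)

/-- **Liar-cycle support conditions preclude a global joint distribution**
(probabilistic core of Theorem 15).  If a global joint distribution `p` on all
outcomes assigns probability `0` to each event `{ω : ω_i = v_i ∧ ω_{i+1} ≠ v_{i+1}}`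
(for `i = 0, …, N-2`) and to the event `{ω : ω_{N-1} = v_{N-1} ∧ ω_0 = v_0}`,
then it assigns probability `0` to `{ω : ω_0 = v_0}`. -/
theorem liar_cycle_no_global_distribution
    (N : ℕ) (hN : 2 ≤ N)
    (A : Fin N → Type) [∀ i, Fintype (A i)] [∀ i, Nonempty (A i)]
    (v : ∀ i, A i) (p : PMF (∀ i, A i))
    (hchain : ∀ i : Fin N, ∀ h : (i : ℕ) + 1 < N,
      prob p {ω | ω i = v i ∧ ω ⟨(i : ℕ) + 1, h⟩ ≠ v ⟨(i : ℕ) + 1, h⟩} = 0)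
    (hlast : ∀ i : Fin N, (i : ℕ) + 1 = N →
      prob p {ω | ω i = v i ∧ ω ⟨0, by omega⟩ = v ⟨0, by omega⟩} = 0) :
    prob p {ω | ω ⟨0, by omega⟩ = v ⟨0, by omega⟩} = 0 := by
  rw [prob_eq_zero_iff]
  intro ω hω
  by_contra hp
  -- every coordinate agrees with v
  have key : ∀ k : ℕ, ∀ hk : k < N, ω ⟨k, hk⟩ = v ⟨k, hk⟩ := by
    intro k
    induction k with
    | zero => intro hk; exact hω
    | succ n ih =>
      intro hk
      have hn : n < N := Nat.lt_of_succ_lt hk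
      by_contra hne
      have := hchain ⟨n, hn⟩ hk
      rw [prob_eq_zero_iff] at this
      exact hp (this ω ⟨ih hn, hne⟩)
  have hN1 : N - 1 < N := by omega
  have := hlast ⟨N - 1, hN1⟩ (by simp; omega)
  rw [prob_eq_zero_iff] at this
  exact hp (this ω ⟨key (N - 1) hN1, hω⟩)
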